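/- Define D(p) = p⁶ − 4p⁵ + 6p⁴ − 6p³ + 5p² − 2p + 1, f₃(p) = p²·(p² − 4p + 4)/D(p), and f₁(p) = p·(p⁵ − 4p⁴ + 6p³ − 5p² + 2p + 1)/D(p). Then for all p ∈ [0,1]: (a) D(p) − p²·(p − 2)² = (1 − p)³·(1 + p + p² − p³), so that f₃(p) = 1 − (1−p)³·(1 + p + p² − p³)/D(p); (b) 0 ≤ f₃(p) ≤ 1 with f₃(0) = 0 and f₃(1) = 1; (c) f₃ is monotonically nondecreasing on [0,1]; (d) f₃(p) ≤ f₁(p) for all p ∈ [0,1]. -/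

import Mathlib

open Set

/-- Denominator of the BCJR transfer functions of the rate-2/3 recursive systematic
convolutional encoder with `G(D) = [[1, 0, 1/(1+D)], [0, 1, D/(1+D)]]`. -/
noncomputable def Dden (p : ℝ) : ℝ :=
  p ^ 6 - 4 * p ^ 5 + 6 * p ^ 4 - 6 * p ^ 3 + 5 * p ^ 2 - 2 * p + 1

/-- Extrinsic erasure-probability transfer function, for the parity output bit, of the
BCJR decoder on the BEC, at equal input erasure probability `p`. -/
noncomputable def f₃ (p : ℝ) : ℝ := p ^ 2 * (p ^ 2 - 4 * p + 4) / Dden p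

/-- The corresponding transfer function for the systematic output bits. -/
noncomputable def f₁ (p : ℝ) : ℝ :=
  p * (p ^ 5 - 4 * p ^ 4 + 6 * p ^ 3 - 5 * p ^ 2 + 2 * p + 1) / Dden p

lemma Dden_pos {p : ℝ} (h0 : 0 ≤ p) (h1 : p ≤ 1) : 0 < Dden p := by
  unfold Dden
  nlinarith [sq_nonneg (1-p), sq_nonneg p, sq_nonneg (p*(1-p)), sq_nonneg (p^2*(1-p)),
    sq_nonneg (p^3 - p), mul_nonneg (mul_nonneg h0 h0) (sub_nonneg.2 h1)]

lemma f₃_hasDerivAt (x : ℝ) (hx : Dden x ≠ 0) :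
    HasDerivAt f₃ ((x*(x-1)^2*(-2*x^6+12*x^5-22*x^4+10*x^3+4*x^2-4*x+8)) / (Dden x)^2) x := by
  have hn : HasDerivAt (fun p : ℝ => p ^ 2 * (p ^ 2 - 4 * p + 4))
      (4*x^3-12*x^2+8*x) x := by
    have h2 := hasDerivAt_pow 2 x
    have := h2.mul ((h2.sub ((hasDerivAt_id' x).const_mul 4)).add_const 4)
    refine this.congr_deriv ?_
    push_cast [Pi.sub_apply]; ring
  have hd : HasDerivAt Dden (6*x^5-20*x^4+24*x^3-18*x^2+10*x-2) x := by
    unfold Dden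
    have h6 := hasDerivAt_pow 6 x
    have h5 := (hasDerivAt_pow 5 x).const_mul (4:ℝ)
    have h4 := (hasDerivAt_pow 4 x).const_mul (6:ℝ)
    have h3 := (hasDerivAt_pow 3 x).const_mul (6:ℝ)
    have h2 := (hasDerivAt_pow 2 x).const_mul (5:ℝ)
    have h1 := (hasDerivAt_id' x).const_mul (2:ℝ)
    have := (((((h6.sub h5).add h4).sub h3).add h2).sub h1).add_const (1:ℝ)
    refine this.congr_deriv ?_
    push_cast; ring
  have := hn.div hd hx
  have heq : f₃ = fun y : ℝ => y ^ 2 * (y ^ 2 - 4 * y + 4) / Dden y := rfl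
  rw [heq]
  refine this.congr_deriv ?_
  unfold Dden
  rw [div_eq_div_iff (by positivity) (by positivity)]
  ring

/-- Properties of `f₃`: (a) `D(p) − p²(p−2)² = (1−p)³(1 + p + p² − p³)`, so
`f₃(p) = 1 − (1−p)³(1 + p + p² − p³)/D(p)`; (b) `0 ≤ f₃(p) ≤ 1` with `f₃(0) = 0`,
`f₃(1) = 1`; (c) `f₃` is monotonically nondecreasing on `[0,1]`;
(d) `f₃(p) ≤ f₁(p)` on `[0,1]`. -/
theorem f₃_properties :
    (∀ p ∈ Icc (0:ℝ) 1,
      Dden p - p ^ 2 * (p - 2) ^ 2 = (1 - p) ^ 3 * (1 + p + p ^ 2 - p ^ 3) ∧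
      f₃ p = 1 - (1 - p) ^ 3 * (1 + p + p ^ 2 - p ^ 3) / Dden p) ∧
    (∀ p ∈ Icc (0:ℝ) 1, 0 ≤ f₃ p ∧ f₃ p ≤ 1) ∧ f₃ 0 = 0 ∧ f₃ 1 = 1 ∧
    MonotoneOn f₃ (Icc (0:ℝ) 1) ∧
    (∀ p ∈ Icc (0:ℝ) 1, f₃ p ≤ f₁ p) := by
  refine ⟨?_, ?_, ?_, ?_, ?_, ?_⟩
  · intro p hp
    obtain ⟨h0, h1⟩ := hp
    have hD := Dden_pos h0 h1
    constructor
    · unfold Dden; ring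
    · unfold f₃
      field_simp
      unfold Dden
      ring
  · intro p hp
    obtain ⟨h0, h1⟩ := hp
    have hD := Dden_pos h0 h1
    constructor
    · apply div_nonneg _ hD.le
      nlinarith [sq_nonneg (p-2), sq_nonneg p]
    · rw [f₃, div_le_one hD]
      have key : Dden p - p ^ 2 * (p ^ 2 - 4 * p + 4) = (1 - p) ^ 3 * (1 + p + p ^ 2 - p ^ 3) := by
        unfold Dden; ring
      nlinarith [mul_nonneg (pow_nonneg (sub_nonneg.2 h1) 3)
        (by nlinarith [mul_nonneg (mul_nonneg h0 h0) (sub_nonneg.2 h1)] :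
          (0:ℝ) ≤ 1 + p + p ^ 2 - p ^ 3)]
  · simp [f₃]
  · norm_num [f₃, Dden]
  · apply monotoneOn_of_deriv_nonneg (convex_Icc 0 1)
    · have heq : f₃ = fun y : ℝ => y ^ 2 * (y ^ 2 - 4 * y + 4) / Dden y := rfl
      rw [heq]
      apply ContinuousOn.div
      · fun_prop
      · unfold Dden; fun_prop
      · exact fun x hx => (Dden_pos hx.1 hx.2).ne'
    · rw [interior_Icc]
      intro x hx
      exact (f₃_hasDerivAt x (Dden_pos hx.1.le hx.2.le).ne').differentiableAt.differentiableWithinAt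
    · rw [interior_Icc]
      intro x hx
      have h0 := hx.1.le
      have h1 := hx.2.le
      rw [(f₃_hasDerivAt x (Dden_pos h0 h1).ne').deriv]
      apply div_nonneg _ (sq_nonneg _)
      have hr : (0:ℝ) ≤ -2*x^6+12*x^5-22*x^4+10*x^3+4*x^2-4*x+8 := by
        nlinarith [sq_nonneg (x-1), sq_nonneg x, mul_nonneg h0 (sub_nonneg.2 h1),
          sq_nonneg (x^2-x), mul_nonneg (mul_nonneg h0 h0) (sub_nonneg.2 h1), sq_nonneg (x^3-x^2)]
      exact mul_nonneg (mul_nonneg h0 (sq_nonneg _)) hr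
  · intro p hp
    obtain ⟨h0, h1⟩ := hp
    have hD := Dden_pos h0 h1
    rw [f₃, f₁, div_le_div_iff₀ hD hD]
    have key : p * (p ^ 5 - 4 * p ^ 4 + 6 * p ^ 3 - 5 * p ^ 2 + 2 * p + 1)
        - p ^ 2 * (p ^ 2 - 4 * p + 4) = p * (1 - p) ^ 3 * (1 + p - p ^ 2) := by
      ring
    nlinarith [mul_nonneg (mul_nonneg h0 (pow_nonneg (sub_nonneg.2 h1) 3))
      (by nlinarith : (0:ℝ) ≤ 1 + p - p ^ 2), sq_nonneg (Dden p), hD]
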